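/- arXiv:2112.10351 — 2 statements merged into one kernel-verified Lean document; each statement's English description precedes it below -/
import Mathlib

section
/- Let λ > 0 and let M be a Poisson random variable with rate λ, i.e., P(M = m) = e^{-λ} λ^m / m! for m = 0, 1, 2, .... Then E[1/√(M+1)] ≤ √((1 - e^{-λ})/λ); equivalently, ∑_{m=0}^∞ (e^{-λ} λ^m / m!) · (m+1)^{-1/2} ≤ √((1 - e^{-λ})/λ). -/
lemma tsum_pow_div_factorial_eq (l : ℝ) : (∑' m : ℕ, l ^ m / (Nat.factorial m)) = Real.exp l := by
  rw [Real.exp_eq_exp_ℝ, NormedSpace.exp_eq_tsum_div]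

lemma tsum_pow_div_factorial_succ (l : ℝ) (hl : 0 < l) :
    (∑' m : ℕ, l ^ m / (Nat.factorial (m + 1))) = (Real.exp l - 1) / l := by
  have hsum : Summable (fun m : ℕ => l ^ m / (Nat.factorial (m + 1)) : ℕ → ℝ) := by
    refine Summable.of_nonneg_of_le (fun m => by positivity) (fun m => ?_)
      (Real.summable_pow_div_factorial l)
    gcongr
    exact Nat.le_succ m
  have h0 : (∑' m : ℕ, l ^ m / (Nat.factorial m)) =
      1 + ∑' m : ℕ, l ^ (m + 1) / (Nat.factorial (m + 1)) := by
    rw [Summable.tsum_eq_zero_add (Real.summable_pow_div_factorial l)]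
    norm_num
  have h1 : (∑' m : ℕ, l ^ (m + 1) / (Nat.factorial (m + 1)))
      = l * ∑' m : ℕ, l ^ m / (Nat.factorial (m + 1)) := by
    rw [← tsum_mul_left]
    congr 1; ext m; rw [pow_succ]; ring
  rw [tsum_pow_div_factorial_eq] at h0
  field_simp
  rw [h1] at h0
  linarith

/-- For `M ~ Poisson(λ)` with `λ > 0`, `E[1/√(M+1)] ≤ √((1 - e^{-λ})/λ)`. -/
theorem poisson_inv_sqrt_succ_expectation_le (l : ℝ) (hl : 0 < l) :
    (∑' m : ℕ, Real.exp (-l) * l ^ m / (Nat.factorial m) * (1 / Real.sqrt ((m : ℝ) + 1)))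
      ≤ Real.sqrt ((1 - Real.exp (-l)) / l) := by
  set f : ℕ → ℝ := fun m => Real.sqrt (Real.exp (-l) * l ^ m / (Nat.factorial m)) with hf
  set g : ℕ → ℝ := fun m => Real.sqrt (Real.exp (-l) * l ^ m / (Nat.factorial m) / ((m : ℝ) + 1))
    with hg
  have hanonneg : ∀ m : ℕ, (0:ℝ) ≤ Real.exp (-l) * l ^ m / (Nat.factorial m) := fun m => by
    positivity
  have hfg : ∀ m : ℕ, f m * g m
      = Real.exp (-l) * l ^ m / (Nat.factorial m) * (1 / Real.sqrt ((m : ℝ) + 1)) := by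
    intro m
    set a := Real.exp (-l) * l ^ m / (Nat.factorial m) with ha
    have hm1 : (0:ℝ) < (m : ℝ) + 1 := by positivity
    show Real.sqrt a * Real.sqrt (a / ((m:ℝ)+1)) = a * (1 / Real.sqrt ((m:ℝ)+1))
    rw [Real.sqrt_div (hanonneg m), ← mul_div_assoc, Real.mul_self_sqrt (hanonneg m)]
    ring
  have hf2 : ∀ m : ℕ, f m ^ (2:ℝ) = Real.exp (-l) * l ^ m / (Nat.factorial m) := fun m => by
    rw [hf, Real.rpow_two, Real.sq_sqrt (hanonneg m)]
  have hg2 : ∀ m : ℕ, g m ^ (2:ℝ) = Real.exp (-l) * (l ^ m / (Nat.factorial (m + 1))) := by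
    intro m
    rw [hg, Real.rpow_two, Real.sq_sqrt (by positivity)]
    rw [Nat.factorial_succ]
    push_cast
    field_simp
  have hfsum : Summable fun m : ℕ => f m ^ (2:ℝ) := by
    simp only [hf2]
    have := (Real.summable_pow_div_factorial l).mul_left (Real.exp (-l))
    convert this using 2 with m
    · rfl
    ring
  have hgsucc : Summable (fun m : ℕ => l ^ m / (Nat.factorial (m + 1)) : ℕ → ℝ) := by
    refine Summable.of_nonneg_of_le (fun m => by positivity) (fun m => ?_)
      (Real.summable_pow_div_factorial l)
    gcongr
    exact Nat.le_succ m
  have hgsum : Summable fun m : ℕ => g m ^ (2:ℝ) := by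
    simp only [hg2]
    exact hgsucc.mul_left _
  have hpq : (2:ℝ).HolderConjugate 2 := by
    constructor <;> norm_num
  have key := Real.inner_le_Lp_mul_Lq_tsum_of_nonneg hpq
    (fun m => Real.sqrt_nonneg _) (fun m => Real.sqrt_nonneg _) hfsum hgsum
  have hS1 : (∑' m : ℕ, f m ^ (2:ℝ)) = 1 := by
    simp only [hf2]
    rw [show (fun m : ℕ => Real.exp (-l) * l ^ m / (Nat.factorial m))
      = fun m : ℕ => Real.exp (-l) * (l ^ m / (Nat.factorial m)) by ext m; ring,
      tsum_mul_left, tsum_pow_div_factorial_eq, ← Real.exp_add]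
    simp
  have hS2 : (∑' m : ℕ, g m ^ (2:ℝ)) = (1 - Real.exp (-l)) / l := by
    simp only [hg2]
    rw [tsum_mul_left, tsum_pow_div_factorial_succ l hl]
    have h : Real.exp (-l) * Real.exp l = 1 := by rw [← Real.exp_add]; simp
    field_simp
    linarith [h]
  calc (∑' m : ℕ, Real.exp (-l) * l ^ m / (Nat.factorial m) * (1 / Real.sqrt ((m : ℝ) + 1)))
      = ∑' m : ℕ, f m * g m := by
        congr 1; ext m; rw [hfg m]
    _ ≤ (∑' m, f m ^ (2:ℝ)) ^ ((1:ℝ)/2) * (∑' m, g m ^ (2:ℝ)) ^ ((1:ℝ)/2) := key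
    _ = Real.sqrt ((1 - Real.exp (-l)) / l) := by
        rw [hS1, hS2, Real.one_rpow, one_mul, ← Real.sqrt_eq_rpow]
end

section
/- Let d ≥ 1, let m : Fin d → ℕ with m_j ≥ 1 for every j, let w : ∏_j {0, 1, …, m_j − 1} → ℝ and θ : ∏_j {0, 1, …, m_j} → ℝ. Then ∫_{[0,1]^d} [∑_{k_1=0}^{m_1−1} ⋯ ∑_{k_d=0}^{m_d−1} w(k) ∏_{j=1}^d m_j C(m_j − 1, k_j) u_j^{k_j} (1 − u_j)^{m_j − k_j − 1}] · [∑_{l_1=0}^{m_1} ⋯ ∑_{l_d=0}^{m_d} θ(l) ∏_{j=1}^d C(m_j, l_j) u_j^{l_j} (1 − u_j)^{m_j − l_j}] du = ∑_{k} ∑_{l} w(k) θ(l) ∏_{j=1}^d m_j C(m_j − 1, k_j) C(m_j, l_j) B(k_j + l_j + 1, 2 m_j − k_j − l_j), where B is the Beta function. (This yields the closed-form estimator of multivariate Kendall's tau based on the empirical checkerboard Bernstein copula.) -/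
open Finset MeasureTheory

/-- The Beta function `B(a, b) = ∫_0^1 t^(a-1) (1-t)^(b-1) dt`. -/
noncomputable def betaFn (a b : ℝ) : ℝ :=
  ∫ t in (0 : ℝ)..1, t ^ (a - 1) * (1 - t) ^ (b - 1)

lemma integral_pi_Icc {d : ℕ} (f : Fin d → ℝ → ℝ) :
    (∫ u in Set.univ.pi (fun _ : Fin d => Set.Icc (0 : ℝ) 1), ∏ j, f j (u j))
      = ∏ j, ∫ x in Set.Icc (0 : ℝ) 1, f j x := by
  rw [← integral_indicator (MeasurableSet.univ_pi (fun _ => measurableSet_Icc))]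
  have h : ∀ u : Fin d → ℝ,
      (Set.univ.pi fun _ => Set.Icc (0:ℝ) 1).indicator (fun u => ∏ j, f j (u j)) u
        = ∏ j, (Set.Icc (0:ℝ) 1).indicator (f j) (u j) := by
    intro u
    by_cases h : u ∈ Set.univ.pi fun _ : Fin d => Set.Icc (0:ℝ) 1
    · rw [Set.indicator_of_mem h]
      exact Finset.prod_congr rfl fun j _ => (Set.indicator_of_mem (h j trivial) _).symm
    · rw [Set.indicator_of_notMem h]
      simp only [Set.mem_pi, Set.mem_univ, true_implies, not_forall] at h
      obtain ⟨j, hj⟩ := h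
      exact (Finset.prod_eq_zero (mem_univ j) (Set.indicator_of_notMem hj _)).symm
  simp_rw [h]
  rw [MeasureTheory.integral_fintype_prod_volume_eq_prod (ι := Fin d)
    (fun j => (Set.Icc (0:ℝ) 1).indicator (f j))]
  exact Finset.prod_congr rfl fun j _ => integral_indicator measurableSet_Icc

lemma one_dim (mj k l : ℕ) (hk : k < mj) (hl : l < mj + 1) :
    (∫ u in Set.Icc (0 : ℝ) 1,
        ((mj : ℝ) * ((mj - 1).choose k : ℝ) * u ^ k * (1 - u) ^ (mj - k - 1)) *
        ((mj.choose l : ℝ) * u ^ l * (1 - u) ^ (mj - l)))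
      = (mj : ℝ) * ((mj - 1).choose k : ℝ) * (mj.choose l : ℝ) *
          betaFn ((k : ℝ) + (l : ℝ) + 1) (2 * (mj : ℝ) - (k : ℝ) - (l : ℝ)) := by
  have hbeta : betaFn ((k : ℝ) + (l : ℝ) + 1) (2 * (mj : ℝ) - (k : ℝ) - (l : ℝ))
      = ∫ t in (0:ℝ)..1, t ^ (k + l) * (1 - t) ^ ((mj - k - 1) + (mj - l)) := by
    unfold betaFn
    congr 1
    ext t
    have e1 : (k : ℝ) + (l : ℝ) + 1 - 1 = ((k + l : ℕ) : ℝ) := by push_cast; ring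
    have e2 : 2 * (mj : ℝ) - (k : ℝ) - (l : ℝ) - 1 = (((mj - k - 1) + (mj - l) : ℕ) : ℝ) := by
      have h1 : k + 1 ≤ mj := hk
      have h2 : l ≤ mj := Nat.lt_succ_iff.mp hl
      have h3 : (mj - k - 1) + (mj - l) = 2 * mj - k - l - 1 := by omega
      rw [h3]
      push_cast [Nat.cast_sub (by omega : l ≤ 2 * mj - k), Nat.cast_sub (by omega : k ≤ 2 * mj),
        Nat.cast_sub (by omega : 1 ≤ 2 * mj - k - l)]
      ring
    rw [e1, e2, Real.rpow_natCast, Real.rpow_natCast]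
  rw [hbeta, integral_Icc_eq_integral_Ioc,
    ← intervalIntegral.integral_of_le (by norm_num : (0:ℝ) ≤ 1),
    ← intervalIntegral.integral_const_mul]
  congr 1
  ext u
  rw [pow_add, pow_add]
  ring

/-- The integral over the unit cube of the product of a Bernstein density (with
coefficients `w`) and a Bernstein copula (with coefficients `θ`) is a double sum of
products of Beta functions; this yields the closed-form estimator of multivariate
Kendall's tau based on the ECBC. -/
theorem integral_multiBernstein_density_mul_copula
    (d : ℕ) (hd : 1 ≤ d) (m : Fin d → ℕ) (hm : ∀ j, 1 ≤ m j)
    (w : (∀ j, Fin (m j)) → ℝ) (θ : (∀ j, Fin (m j + 1)) → ℝ) :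
    (∫ u in Set.univ.pi (fun _ : Fin d => Set.Icc (0 : ℝ) 1),
        (∑ k : (∀ j, Fin (m j)),
            w k * ∏ j, (m j : ℝ) * ((m j - 1).choose (k j) : ℝ) *
              u j ^ (k j : ℕ) * (1 - u j) ^ (m j - (k j : ℕ) - 1)) *
        (∑ l : (∀ j, Fin (m j + 1)),
            θ l * ∏ j, ((m j).choose (l j) : ℝ) *
              u j ^ (l j : ℕ) * (1 - u j) ^ (m j - (l j : ℕ))))
      = ∑ k : (∀ j, Fin (m j)), ∑ l : (∀ j, Fin (m j + 1)),
          w k * θ l * ∏ j, (m j : ℝ) * ((m j - 1).choose (k j) : ℝ) *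
            ((m j).choose (l j) : ℝ) *
            betaFn (((k j : ℕ) : ℝ) + ((l j : ℕ) : ℝ) + 1)
              (2 * (m j : ℝ) - ((k j : ℕ) : ℝ) - ((l j : ℕ) : ℝ)) := by
  have hIntTerm : ∀ (k : ∀ j, Fin (m j)) (l : ∀ j, Fin (m j + 1)),
      IntegrableOn (fun u : Fin d → ℝ =>
          (w k * ∏ j, (m j : ℝ) * ((m j - 1).choose (k j) : ℝ) *
              u j ^ (k j : ℕ) * (1 - u j) ^ (m j - (k j : ℕ) - 1)) *
          (θ l * ∏ j, ((m j).choose (l j) : ℝ) *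
              u j ^ (l j : ℕ) * (1 - u j) ^ (m j - (l j : ℕ))))
        (Set.univ.pi fun _ => Set.Icc (0:ℝ) 1) := by
    intro k l
    apply ContinuousOn.integrableOn_compact (isCompact_univ_pi fun _ => isCompact_Icc)
    apply Continuous.continuousOn
    fun_prop
  simp_rw [Finset.sum_mul_sum]
  rw [integral_finset_sum _ fun k _ => integrable_finset_sum _ fun l _ => hIntTerm k l]
  refine Finset.sum_congr rfl fun k _ => ?_
  rw [integral_finset_sum _ fun l _ => hIntTerm k l]
  refine Finset.sum_congr rfl fun l _ => ?_
  have hre : ∀ u : Fin d → ℝ,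
      (w k * ∏ j, (m j : ℝ) * ((m j - 1).choose (k j) : ℝ) *
          u j ^ (k j : ℕ) * (1 - u j) ^ (m j - (k j : ℕ) - 1)) *
      (θ l * ∏ j, ((m j).choose (l j) : ℝ) *
          u j ^ (l j : ℕ) * (1 - u j) ^ (m j - (l j : ℕ)))
        = (w k * θ l) * ∏ j,
            (((m j : ℝ) * ((m j - 1).choose (k j) : ℝ) *
              u j ^ (k j : ℕ) * (1 - u j) ^ (m j - (k j : ℕ) - 1)) *
            (((m j).choose (l j) : ℝ) * u j ^ (l j : ℕ) * (1 - u j) ^ (m j - (l j : ℕ)))) := by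
    intro u
    rw [mul_mul_mul_comm, ← Finset.prod_mul_distrib]
  simp_rw [hre]
  rw [MeasureTheory.integral_const_mul,
    integral_pi_Icc (fun j x =>
      ((m j : ℝ) * ((m j - 1).choose (k j) : ℝ) * x ^ (k j : ℕ) *
        (1 - x) ^ (m j - (k j : ℕ) - 1)) *
      (((m j).choose (l j) : ℝ) * x ^ (l j : ℕ) * (1 - x) ^ (m j - (l j : ℕ))))]
  congr 1
  exact Finset.prod_congr rfl fun j _ => one_dim (m j) (k j) (l j) (k j).isLt (l j).isLt
end
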